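/- Let v₁, …, v_r be distinct monomials of A whose F-span is a Kummer space, and suppose that for all j ≠ k either v_j·v_k = i·v_k·v_j or v_k·v_j = i·v_j·v_k (no two of them commute or anti-commute). Then there is a permutation σ of {1, …, r} such that v_{σ(k)}·v_{σ(j)} = i·v_{σ(j)}·v_{σ(k)} whenever k < j. -/

import Mathlib

-- cycle lemma
lemma cycleFalse {F A : Type*} [Field F] [CharZero F] [DivisionRing A] [Algebra F A]
    (i : F) (hi : i ^ 2 = -1) (z1 z2 z3 : A)
    (h1 : z1 ≠ 0) (h2 : z2 ≠ 0) (h3 : z3 ≠ 0)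
    (h21 : z2*z1 = (-i)•(z1*z2)) (h32 : z3*z2 = (-i)•(z2*z3)) (h31 : z3*z1 = i•(z1*z3))
    (hK : ∀ c : F, ∃ μ : F, (z1 + z2 + c•z3)^4 = algebraMap F A μ) : False := by
  have hii : i * i = -1 := by rw [← sq]; exact hi
  have hi0 : i ≠ 0 := by intro h; rw [h] at hi; norm_num at hi
  have h21' : ∀ t : A, z2*(z1*t) = (-i)•(z1*(z2*t)) := by
    intro t; rw [← mul_assoc, h21, smul_mul_assoc, mul_assoc]
  have h32' : ∀ t : A, z3*(z2*t) = (-i)•(z2*(z3*t)) := by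
    intro t; rw [← mul_assoc, h32, smul_mul_assoc, mul_assoc]
  have h31' : ∀ t : A, z3*(z1*t) = i•(z1*(z3*t)) := by
    intro t; rw [← mul_assoc, h31, smul_mul_assoc, mul_assoc]
  have hii2 : ∀ c : F, i * (i * c) = -c := by
    intro c; rw [← mul_assoc, hii]; ring
  have hident : (z1+z2+(1:F)•z3)^4 - (z1+z2+i•z3)^4 + (z1+z2+(-1:F)•z3)^4 - (z1+z2+(-i)•z3)^4
      = (16 - 16*i) • (z1*(z2*(z3*z3))) := by
    simp only [pow_succ, pow_zero, one_mul, add_mul, mul_add, smul_mul_assoc,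
      mul_smul_comm, smul_smul, mul_assoc, h21, h21', h32, h32', h31, h31',
      smul_add, one_smul, neg_smul, neg_neg, mul_neg, neg_mul, mul_one, smul_neg, hii, hii2]
    module
  obtain ⟨μ1, e1⟩ := hK 1
  obtain ⟨μ2, e2⟩ := hK i
  obtain ⟨μ3, e3⟩ := hK (-1)
  obtain ⟨μ4, e4⟩ := hK (-i)
  set w : A := z1*(z2*(z3*z3)) with hw
  have key : (16 - 16*i) • w = algebraMap F A (μ1 - μ2 + μ3 - μ4) := by
    rw [← hident, e1, e2, e3, e4, map_sub, map_add, map_sub]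
  have hcom : w * z1 = i • (z1 * w) := by
    rw [hw]
    simp only [mul_assoc, h21, h21', h31, h31', h32, h32', mul_smul_comm, smul_smul,
      neg_smul, smul_neg, neg_neg, hii, hii2, mul_one, one_mul, mul_neg, neg_mul]
  have keyl : (16 - 16*i) • (z1 * w) = ((16 - 16*i) * i) • (z1 * w) := by
    have e1' : z1 * ((16 - 16*i) • w) = (16 - 16*i) • (z1 * w) := mul_smul_comm _ _ _
    have e2' : ((16 - 16*i) • w) * z1 = ((16 - 16*i) * i) • (z1 * w) := by
      rw [smul_mul_assoc, hcom, smul_smul]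
    rw [← e1', ← e2', key, Algebra.commutes]
  have hzw : z1 * w ≠ 0 := by
    rw [hw]; exact mul_ne_zero h1 (mul_ne_zero h1 (mul_ne_zero h2 (mul_ne_zero h3 h3)))
  have hdiff : ((16 - 16*i) - (16 - 16*i) * i) • (z1 * w) = 0 := by
    rw [sub_smul, keyl, sub_self]
  have hc : (16 - 16*i) - (16 - 16*i) * i = -32 * i := by linear_combination (16 : F) * hii
  rw [hc] at hdiff
  have : z1 * w = 0 := by
    have h32 : (-32 * i : F) ≠ 0 := by
      simp [hi0]
    calc z1 * w = (-32*i:F)⁻¹ • ((-32*i:F) • (z1 * w)) := (inv_smul_smul₀ h32 _).symm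
    _ = 0 := by rw [hdiff, smul_zero]
  exact hzw this


lemma sortTournament {r : ℕ} (R : Fin r → Fin r → Prop)
    (htot : ∀ j k, j ≠ k → R j k ∨ R k j)
    (hasym : ∀ j k, R j k → R k j → False)
    (htrans : ∀ a b c, R a b → R b c → R a c) :
    ∃ σ : Equiv.Perm (Fin r), ∀ k j : Fin r, k < j → R (σ k) (σ j) := by
  classical
  let s : Fin r → Fin r → Prop := fun a b => a = b ∨ R a b
  haveI : DecidableRel s := fun a b => Classical.dec _
  haveI : IsTotal (Fin r) s := ⟨by
    intro a b
    by_cases h : a = b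
    · exact Or.inl (Or.inl h)
    · rcases htot a b h with h' | h'
      · exact Or.inl (Or.inr h')
      · exact Or.inr (Or.inr h')⟩
  haveI : IsTrans (Fin r) s := ⟨by
    rintro a b c (rfl | hab) (rfl | hbc)
    · exact Or.inl rfl
    · exact Or.inr hbc
    · exact Or.inr hab
    · exact Or.inr (htrans a b c hab hbc)⟩
  haveI : IsAntisymm (Fin r) s := ⟨by
    rintro a b (rfl | hab) (h | hba)
    · rfl
    · rfl
    · exact h.symm
    · exact absurd hba (fun h' => hasym a b hab h')⟩
  set l : List (Fin r) := Finset.sort Finset.univ s with hl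
  have hlen : l.length = r := by
    rw [hl, Finset.length_sort, Finset.card_univ, Fintype.card_fin]
  let f : Fin r → Fin r := fun k => l.get (Fin.cast hlen.symm k)
  have hnd : l.Nodup := Finset.sort_nodup Finset.univ s
  have hfinj : Function.Injective f := by
    intro a b hab
    have := (List.nodup_iff_injective_get.mp hnd) hab
    exact Fin.cast_injective hlen.symm this
  have hfbij := Finite.injective_iff_bijective.mp hfinj
  refine ⟨Equiv.ofBijective f hfbij, ?_⟩
  intro k j hkj
  have hsort : l.Pairwise s := Finset.pairwise_sort Finset.univ s
  have hlt : Fin.cast hlen.symm k < Fin.cast hlen.symm j := by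
    simp only [Fin.lt_def, Fin.coe_cast]; exact hkj
  have hs : s (f k) (f j) := hsort.rel_get_of_lt hlt
  have hne : f k ≠ f j := fun h => absurd (hfinj h) (ne_of_lt hkj)
  rcases hs with h | h
  · exact absurd h hne
  · exact h



/-- A fixed presentation of a tensor product of `n` cyclic algebras of degree 4
over `F`: generators `x k`, `y k` with `(x k)⁴ = αₖ·1`, `(y k)⁴ = βₖ·1`,
`x k · y k = i · (y k · x k)`, generators with different indices commuting, and the
`x k, y k` generating `A` as an `F`-algebra. -/
structure TensorCyclicPres (F A : Type*) [Field F] [Ring A] [Algebra F A]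
    (i : F) (n : ℕ) where
  x : Fin n → A
  y : Fin n → A
  α : Fin n → F
  β : Fin n → F
  α_ne_zero : ∀ k, α k ≠ 0
  β_ne_zero : ∀ k, β k ≠ 0
  x_pow : ∀ k, x k ^ 4 = algebraMap F A (α k)
  y_pow : ∀ k, y k ^ 4 = algebraMap F A (β k)
  xy_rel : ∀ k, x k * y k = i • (y k * x k)
  xx_comm : ∀ k l, k ≠ l → Commute (x k) (x l)
  yy_comm : ∀ k l, k ≠ l → Commute (y k) (y l)
  xy_comm : ∀ k l, k ≠ l → Commute (x k) (y l)
  generates : Algebra.adjoin F (Set.range x ∪ Set.range y) = ⊤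

/-- A monomial with respect to the presentation: an element of the form
`∏ₖ (x k)^{aₖ} (y k)^{bₖ}` with `0 ≤ aₖ, bₖ ≤ 3`. -/
def TensorCyclicPres.IsMonomial {F A : Type*} [Field F] [Ring A] [Algebra F A]
    {i : F} {n : ℕ} (P : TensorCyclicPres F A i n) (v : A) : Prop :=
  ∃ a b : Fin n → Fin 4,
    v = ((List.finRange n).map (fun k => P.x k ^ (a k : ℕ) * P.y k ^ (b k : ℕ))).prod

/-- If `v₁, …, v_r` are distinct monomials spanning a Kummer space, such that for any two
of them either `vⱼ vₖ = i · vₖ vⱼ` or `vₖ vⱼ = i · vⱼ vₖ` (no two commute or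
anti-commute), then they can be reordered by a permutation `σ` so that
`v_{σ(k)} v_{σ(j)} = i · v_{σ(j)} v_{σ(k)}` whenever `k < j`. -/
theorem statement12 {F A : Type*} [Field F] [CharZero F] [DivisionRing A] [Algebra F A]
    (i : F) (hi : i ^ 2 = -1) (n : ℕ) (hn : 1 ≤ n)
    (P : TensorCyclicPres F A i n) (hdim : Module.finrank F A = 16 ^ n)
    (r : ℕ) (v : Fin r → A)
    (hmon : ∀ k, P.IsMonomial (v k)) (hinj : Function.Injective v)
    (hK : ∀ u ∈ Submodule.span F (Set.range v), u ^ 4 ∈ Set.range (algebraMap F A))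
    (hrel : ∀ j k : Fin r, j ≠ k →
      v j * v k = i • (v k * v j) ∨ v k * v j = i • (v j * v k)) :
    ∃ σ : Equiv.Perm (Fin r), ∀ k j : Fin r, k < j →
      v (σ k) * v (σ j) = i • (v (σ j) * v (σ k)) := by
  classical
  have hii : i * i = -1 := by rw [← sq]; exact hi
  have hi0 : i ≠ 0 := by intro h; rw [h] at hi; norm_num at hi
  have halg : Function.Injective (algebraMap F A) := (algebraMap F A).injective
  -- generators are nonzero
  have hxne : ∀ k, P.x k ≠ 0 := by
    intro k h
    have hp := P.x_pow k
    rw [h, zero_pow (by norm_num : (4:ℕ) ≠ 0)] at hp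
    exact P.α_ne_zero k (halg (by rw [map_zero, ← hp]))
  have hyne : ∀ k, P.y k ≠ 0 := by
    intro k h
    have hp := P.y_pow k
    rw [h, zero_pow (by norm_num : (4:ℕ) ≠ 0)] at hp
    exact P.β_ne_zero k (halg (by rw [map_zero, ← hp]))
  have hvne : ∀ k, v k ≠ 0 := by
    intro k
    obtain ⟨a, b, hab⟩ := hmon k
    rw [hab]
    apply List.prod_ne_zero
    intro hz
    obtain ⟨m, -, hm⟩ := List.mem_map.mp hz
    exact mul_ne_zero (pow_ne_zero _ (hxne m)) (pow_ne_zero _ (hyne m)) hm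
  set R : Fin r → Fin r → Prop := fun j k => v j * v k = i • (v k * v j) with hR
  have hasym : ∀ j k, R j k → R k j → False := by
    intro j k hjk hkj
    rw [hR] at hjk hkj
    have : v j * v k = -(v j * v k) := by
      calc v j * v k = i • (v k * v j) := hjk
      _ = i • (i • (v j * v k)) := by rw [hkj]
      _ = -(v j * v k) := by rw [smul_smul, hii, neg_smul, one_smul]
    have h2 : v j * v k = 0 := by
      have h20 : (2:F) • (v j * v k) = 0 := by
        rw [two_smul]
        nth_rewrite 1 [this]
        exact neg_add_cancel _
      have := congrArg (fun t => ((2:F)⁻¹) • t) h20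
      simpa [smul_smul, inv_mul_cancel₀ (two_ne_zero (α := F))] using this
    exact mul_ne_zero (hvne j) (hvne k) h2
  have hKc : ∀ a b c : Fin r, ∀ e : F,
      ∃ μ : F, (v a + v b + e • v c)^4 = algebraMap F A μ := by
    intro a b c e
    have hmem : v a + v b + e • v c ∈ Submodule.span F (Set.range v) := by
      apply Submodule.add_mem
      apply Submodule.add_mem
      · exact Submodule.subset_span ⟨a, rfl⟩
      · exact Submodule.subset_span ⟨b, rfl⟩
      · exact Submodule.smul_mem _ _ (Submodule.subset_span ⟨c, rfl⟩)
    obtain ⟨μ, hμ⟩ := hK _ hmem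
    exact ⟨μ, hμ.symm⟩
  have hflip : ∀ j k, R j k → v k * v j = (-i) • (v j * v k) := by
    intro j k hjk
    rw [hR] at hjk
    rw [hjk, smul_smul, neg_mul, hii, neg_neg, one_smul]
  have htrans : ∀ a b c, R a b → R b c → R a c := by
    intro a b c hab hbc
    by_contra hac
    have hab' : a ≠ b := fun h => hasym a b hab (h ▸ hab)
    have hbc' : b ≠ c := fun h => hasym b c hbc (h ▸ hbc)
    have hac' : a ≠ c := by
      intro h; subst h
      exact hasym a b hab hbc
    have hca : R c a := by
      rcases hrel a c hac' with h | h
      · exact absurd h hac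
      · exact h
    exact cycleFalse i hi (v a) (v b) (v c) (hvne a) (hvne b) (hvne c)
      (hflip a b hab) (hflip b c hbc) hca (hKc a b c)
  exact sortTournament R (fun j k h => hrel j k h) hasym htrans
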